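/- Let L be a list of distinct keys and L' = a :: L with a not in L. For any pivot p < a occurring in both recursion trees, the input list to the recursive call on the left child of p is the same in Q(L) and Q(L'); symmetrically, for any pivot p > a, the input to the recursive call on the right child of p is the same in both trees. -/

import Mathlib

/-- The list of inputs to all recursive calls (nodes of the recursion tree)
of head-pivot Quicksort on `L`. -/
def calls : List ℤ → List (List ℤ)
  | [] => []
  | h :: t =>
      (h :: t) :: (calls (t.filter (· < h)) ++ calls (t.filter (h < ·)))
termination_by L => L.length
decreasing_by
  all_goals simp [Nat.lt_succ_iff, List.length_filter_le]
  all_goals exact (List.length_filter_le _ _).trans (by simp)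

theorem mem_of_mem_calls : ∀ n (L M : List ℤ) (x : ℤ), L.length ≤ n →
    M ∈ calls L → x ∈ M → x ∈ L := by
  intro n
  induction n with
  | zero =>
    intro L M x hlen hM hx
    match L with
    | [] => simp [calls] at hM
    | h :: t => simp at hlen
  | succ n ih =>
    intro L M x hlen hM hx
    match L with
    | [] => simp [calls] at hM
    | h :: t =>
      rw [calls] at hM
      simp at hlen
      rcases List.mem_cons.1 hM with rfl | hM
      · exact hx
      rcases List.mem_append.1 hM with h1 | h1
      · exact List.mem_cons_of_mem _ (List.mem_of_mem_filter
          (ih _ _ _ (le_trans (List.length_filter_le _ _) hlen) h1 hx))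
      · exact List.mem_cons_of_mem _ (List.mem_of_mem_filter
          (ih _ _ _ (le_trans (List.length_filter_le _ _) hlen) h1 hx))

theorem calls_uniq : ∀ n (L : List ℤ), L.length ≤ n → L.Nodup →
    ∀ (M N : List ℤ) (p : ℤ), M ∈ calls L → N ∈ calls L →
    M.head? = some p → N.head? = some p → M = N := by
  intro n
  induction n with
  | zero =>
    intro L hlen _ M N p hM _ _ _
    match L with
    | [] => simp [calls] at hM
    | h :: t => simp at hlen
  | succ n ih =>
    intro L hlen hnd M N p hM hN hMp hNp
    match L with
    | [] => simp [calls] at hM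
    | h :: t =>
      rw [calls] at hM hN
      simp at hlen
      have hnd' := (List.nodup_cons.1 hnd)
      have hmemp : ∀ K ∈ calls (t.filter (· < h)) ++ calls (t.filter (h < ·)),
          K.head? = some p → p ∈ t := by
        intro K hK hKp
        have hpK : p ∈ K := List.mem_of_mem_head? (by simp [hKp])
        rcases List.mem_append.1 hK with h1 | h1
        · exact List.mem_of_mem_filter (mem_of_mem_calls _ _ _ _
            (le_trans (List.length_filter_le _ _) hlen) h1 hpK)
        · exact List.mem_of_mem_filter (mem_of_mem_calls _ _ _ _
            (le_trans (List.length_filter_le _ _) hlen) h1 hpK)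
      rcases List.mem_cons.1 hM with rfl | hM
      · rcases List.mem_cons.1 hN with rfl | hN
        · rfl
        · simp at hMp
          exact absurd (hMp ▸ hmemp N hN hNp) hnd'.1
      · rcases List.mem_cons.1 hN with rfl | hN
        · simp at hNp
          exact absurd (hNp ▸ hmemp M hM hMp) hnd'.1
        · -- both in subtrees
          have hpM : p ∈ M := List.mem_of_mem_head? (by simp [hMp])
          have hpN : p ∈ N := List.mem_of_mem_head? (by simp [hNp])
          rcases List.mem_append.1 hM with h1 | h1 <;>
            rcases List.mem_append.1 hN with h2 | h2
          · exact ih _ (le_trans (List.length_filter_le _ _) hlen)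
              (hnd'.2.filter _) _ _ _ h1 h2 hMp hNp
          · have : p < h := by
              simpa using List.of_mem_filter (mem_of_mem_calls _ _ _ _
                (le_trans (List.length_filter_le _ _) hlen) h1 hpM)
            have : h < p := by
              simpa using List.of_mem_filter (mem_of_mem_calls _ _ _ _
                (le_trans (List.length_filter_le _ _) hlen) h2 hpN)
            omega
          · have : h < p := by
              simpa using List.of_mem_filter (mem_of_mem_calls _ _ _ _
                (le_trans (List.length_filter_le _ _) hlen) h1 hpM)
            have : p < h := by
              simpa using List.of_mem_filter (mem_of_mem_calls _ _ _ _
                (le_trans (List.length_filter_le _ _) hlen) h2 hpN)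
            omega
          · exact ih _ (le_trans (List.length_filter_le _ _) hlen)
              (hnd'.2.filter _) _ _ _ h1 h2 hMp hNp

theorem filt_comm (t : List ℤ) (q r : ℤ → Prop) [DecidablePred q] [DecidablePred r] :
    (t.filter (fun x => q x)).filter (fun x => r x)
      = (t.filter (fun x => r x)).filter (fun x => q x) := by
  simp [List.filter_filter]
  apply List.filter_congr
  intro x _
  by_cases h1 : r x <;> by_cases h2 : q x <;> simp [h1, h2]

theorem calls_filter_lt : ∀ n (K : List ℤ), K.length ≤ n → ∀ (a : ℤ) (M' : List ℤ),
    M' ∈ calls (K.filter (· < a)) →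
    ∃ M ∈ calls K, M.head? = M'.head? ∧ M' = M.filter (· < a) := by
  intro n
  induction n with
  | zero =>
    intro K hlen a M' hM'
    match K with
    | [] => simp [calls] at hM'
    | h :: t => simp at hlen
  | succ n ih =>
    intro K hlen a M' hM'
    match K with
    | [] => simp [calls] at hM'
    | h :: t =>
      simp at hlen
      by_cases hha : h < a
      · rw [show (h :: t).filter (· < a) = h :: t.filter (· < a) by simp [hha],
          calls] at hM'
        rcases List.mem_cons.1 hM' with rfl | hM'
        · exact ⟨h :: t, by rw [calls]; simp, by simp, by simp [hha]⟩
        rcases List.mem_append.1 hM' with h1 | h1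
        · -- left child: (t.filter(·<a)).filter(·<h) = t.filter(·<h)
          rw [show ((t.filter (· < a)).filter (· < h)) = t.filter (· < h) by
              rw [filt_comm t (· < a) (· < h), List.filter_eq_self.2]
              intro x hx
              have := List.of_mem_filter hx
              simp at this ⊢; omega] at h1
          refine ⟨M', by rw [calls]; simp; exact Or.inr (Or.inl h1), rfl, ?_⟩
          rw [List.filter_eq_self.2]
          intro x hx
          have : x ∈ t.filter (· < h) := mem_of_mem_calls _ _ _ _
            (le_trans (List.length_filter_le _ _) hlen) h1 hx
          have := List.of_mem_filter this
          simp at this ⊢; omega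
        · -- right child: commute filters, use IH
          rw [show ((t.filter (· < a)).filter (h < ·))
              = ((t.filter (h < ·)).filter (· < a)) from
              filt_comm t (· < a) (h < ·)] at h1
          obtain ⟨M, hM, hh, he⟩ := ih _ (le_trans (List.length_filter_le _ _) hlen) a M' h1
          exact ⟨M, by rw [calls]; simp; exact Or.inr (Or.inr hM), hh, he⟩
      · -- a ≤ h : filter drops h
        rw [show (h :: t).filter (· < a) = (t.filter (· < h)).filter (· < a) by
            rw [filt_comm t (· < h) (· < a)]
            simp [hha]
            exact List.filter_congr (fun x _ => by
              by_cases hx : x < a <;> simp [hx] <;> omega)] at hM'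
        obtain ⟨M, hM, hh, he⟩ := ih _ (le_trans (List.length_filter_le _ _) hlen) a M' hM'
        exact ⟨M, by rw [calls]; simp; exact Or.inr (Or.inl hM), hh, he⟩

theorem calls_filter_gt : ∀ n (K : List ℤ), K.length ≤ n → ∀ (a : ℤ) (M' : List ℤ),
    M' ∈ calls (K.filter (a < ·)) →
    ∃ M ∈ calls K, M.head? = M'.head? ∧ M' = M.filter (a < ·) := by
  intro n
  induction n with
  | zero =>
    intro K hlen a M' hM'
    match K with
    | [] => simp [calls] at hM'
    | h :: t => simp at hlen
  | succ n ih =>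
    intro K hlen a M' hM'
    match K with
    | [] => simp [calls] at hM'
    | h :: t =>
      simp at hlen
      by_cases hha : a < h
      · rw [show (h :: t).filter (a < ·) = h :: t.filter (a < ·) by simp [hha],
          calls] at hM'
        rcases List.mem_cons.1 hM' with rfl | hM'
        · exact ⟨h :: t, by rw [calls]; simp, by simp, by simp [hha]⟩
        rcases List.mem_append.1 hM' with h1 | h1
        · -- left child: commute filters, use IH
          rw [show ((t.filter (a < ·)).filter (· < h))
              = ((t.filter (· < h)).filter (a < ·)) from
              filt_comm t (a < ·) (· < h)] at h1
          obtain ⟨M, hM, hh, he⟩ := ih _ (le_trans (List.length_filter_le _ _) hlen) a M' h1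
          exact ⟨M, by rw [calls]; simp; exact Or.inr (Or.inl hM), hh, he⟩
        · -- right child: (t.filter(a<·)).filter(h<·) = t.filter(h<·)
          rw [show ((t.filter (a < ·)).filter (h < ·)) = t.filter (h < ·) by
              rw [filt_comm t (a < ·) (h < ·), List.filter_eq_self.2]
              intro x hx
              have := List.of_mem_filter hx
              simp at this ⊢; omega] at h1
          refine ⟨M', by rw [calls]; simp; exact Or.inr (Or.inr h1), rfl, ?_⟩
          rw [List.filter_eq_self.2]
          intro x hx
          have : x ∈ t.filter (h < ·) := mem_of_mem_calls _ _ _ _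
            (le_trans (List.length_filter_le _ _) hlen) h1 hx
          have := List.of_mem_filter this
          simp at this ⊢; omega
      · -- h ≤ a : filter drops h
        rw [show (h :: t).filter (a < ·) = (t.filter (h < ·)).filter (a < ·) by
            rw [filt_comm t (h < ·) (a < ·)]
            simp [hha]
            exact List.filter_congr (fun x _ => by
              by_cases hx : a < x <;> simp [hx] <;> omega)] at hM'
        obtain ⟨M, hM, hh, he⟩ := ih _ (le_trans (List.length_filter_le _ _) hlen) a M' hM'
        exact ⟨M, by rw [calls]; simp; exact Or.inr (Or.inr hM), hh, he⟩

/-- For `L' = a :: L` with `a` fresh: for any pivot `p < a` occurring in both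
recursion trees, the input of the left-child call of `p` (the filtered list of
keys smaller than `p`) is the same in `Q(L)` and `Q(L')`; symmetrically for
`p > a` and right children. -/
theorem stmt2 (L : List ℤ) (a : ℤ) (ha : a ∉ L) (hnd : (a :: L).Nodup)
    (p : ℤ) (M M' : List ℤ)
    (hM : M ∈ calls L) (hM' : M' ∈ calls (a :: L))
    (hMp : M.head? = some p) (hM'p : M'.head? = some p) :
    (p < a → M.tail.filter (· < p) = M'.tail.filter (· < p)) ∧
    (a < p → M.tail.filter (p < ·) = M'.tail.filter (p < ·)) := by
  have hndL : L.Nodup := (List.nodup_cons.1 hnd).2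
  rw [calls] at hM'
  rcases List.mem_cons.1 hM' with rfl | hM'
  · simp at hM'p
    subst hM'p
    exact ⟨fun h => absurd h (lt_irrefl _), fun h => absurd h (lt_irrefl _)⟩
  rcases List.mem_append.1 hM' with h1 | h1
  · -- M' in left subtree: all its elements are < a, so p < a
    have hpa : p < a := by
      have hpM' : p ∈ M' := List.mem_of_mem_head? (by simp [hM'p])
      have := List.of_mem_filter (mem_of_mem_calls (L.filter (· < a)).length _ _ _
        le_rfl h1 hpM')
      simpa using this
    obtain ⟨N, hN, hh, he⟩ := calls_filter_lt L.length L le_rfl a M' h1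
    rw [hM'p] at hh
    have hMN : M = N := calls_uniq L.length L le_rfl hndL M N p hM hN hMp hh
    subst hMN
    match M, hMp with
    | q :: ms, hMp =>
      simp at hMp
      subst hMp
      rw [show (q :: ms).filter (· < a) = q :: ms.filter (· < a) by simp [hpa]] at he
      subst he
      refine ⟨fun _ => ?_, fun h => absurd h (by omega)⟩
      simp only [List.tail_cons]
      rw [filt_comm ms (· < a) (· < q)]
      apply (List.filter_eq_self.2 _).symm
      intro x hx
      have := List.of_mem_filter hx
      simp at this ⊢
      omega
  · -- M' in right subtree: a < p
    have hap : a < p := by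
      have hpM' : p ∈ M' := List.mem_of_mem_head? (by simp [hM'p])
      have := List.of_mem_filter (mem_of_mem_calls (L.filter (a < ·)).length _ _ _
        le_rfl h1 hpM')
      simpa using this
    obtain ⟨N, hN, hh, he⟩ := calls_filter_gt L.length L le_rfl a M' h1
    rw [hM'p] at hh
    have hMN : M = N := calls_uniq L.length L le_rfl hndL M N p hM hN hMp hh
    subst hMN
    match M, hMp with
    | q :: ms, hMp =>
      simp at hMp
      subst hMp
      rw [show (q :: ms).filter (a < ·) = q :: ms.filter (a < ·) by simp [hap]] at he
      subst he
      refine ⟨fun h => absurd h (by omega), fun _ => ?_⟩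
      simp only [List.tail_cons]
      rw [filt_comm ms (a < ·) (q < ·)]
      apply (List.filter_eq_self.2 _).symm
      intro x hx
      have := List.of_mem_filter hx
      simp at this ⊢
      omega
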